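/- arXiv:2106.02379 — 4 statements merged into one kernel-verified Lean document; each statement's English description precedes it below -/
import Mathlib

section
/- Let V and W be finite-dimensional real inner product spaces. The map sending (A, Z) to A ∘ exp(-Z), from (linear isometric embeddings W → V) × (self-adjoint endomorphisms of W) to Hom(W, V), is injective with image exactly the set of injective linear maps W → V. -/
open scoped InnerProductSpace

section Aux

variable {W : Type*} [NormedAddCommGroup W] [InnerProductSpace ℝ W] [FiniteDimensional ℝ W]

private lemma exp_apply_eigen (Z : W →L[ℝ] W) (v : W) (c : ℝ) (h : Z v = c • v) :
    NormedSpace.exp Z v = Real.exp c • v := by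
  have hpow : ∀ n : ℕ, (Z ^ n) v = c ^ n • v := by
    intro n
    induction n with
    | zero => simp
    | succ n ih =>
      rw [pow_succ, ContinuousLinearMap.mul_apply, h, map_smul, ih, smul_smul, pow_succ,
        mul_comm]
  have hs : Summable fun n : ℕ => ((n.factorial : ℝ))⁻¹ • Z ^ n :=
    NormedSpace.expSeries_summable' (𝕂 := ℝ) Z
  have hs2 : Summable fun n : ℕ => ((n.factorial : ℝ))⁻¹ • c ^ n :=
    NormedSpace.expSeries_summable' (𝕂 := ℝ) c
  calc NormedSpace.exp Z v = (∑' n : ℕ, ((n.factorial : ℝ))⁻¹ • Z ^ n) v := by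
        rw [NormedSpace.exp_eq_tsum ℝ]
    _ = ∑' n : ℕ, ((n.factorial : ℝ))⁻¹ • (Z ^ n) v := by
        simpa using (ContinuousLinearMap.apply ℝ W v).map_tsum hs
    _ = ∑' n : ℕ, (((n.factorial : ℝ))⁻¹ • c ^ n) • v := by
        simp_rw [hpow, smul_smul, smul_eq_mul]
    _ = (∑' n : ℕ, ((n.factorial : ℝ))⁻¹ • c ^ n) • v := by
        rw [hs2.tsum_smul_const v]
    _ = Real.exp c • v := by
        rw [Real.exp_eq_exp_ℝ, NormedSpace.exp_eq_tsum ℝ]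

private lemma eigen_of_exp (S : W →L[ℝ] W) (hS : IsSelfAdjoint S) (v : W) (c : ℝ)
    (hv : NormedSpace.exp S v = Real.exp c • v) : S v = c • v := by
  have hsym : (S : W →ₗ[ℝ] W).IsSymmetric :=
    ContinuousLinearMap.isSelfAdjoint_iff_isSymmetric.mp hS
  set m := Module.finrank ℝ W with hm
  let b := hsym.eigenvectorBasis rfl
  let μ := hsym.eigenvalues rfl
  have hb : ∀ k, S (b k) = μ k • b k := fun k =>
    hsym.apply_eigenvectorBasis rfl k
  have hexpsym :=
    ContinuousLinearMap.isSelfAdjoint_iff_isSymmetric.mp (hS.exp)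
  have hk : ∀ k, Real.exp (μ k) * ⟪b k, v⟫_ℝ = Real.exp c * ⟪b k, v⟫_ℝ := by
    intro k
    have h1 : (NormedSpace.exp S) (b k) = Real.exp (μ k) • b k :=
      exp_apply_eigen S (b k) (μ k) (hb k)
    calc Real.exp (μ k) * ⟪b k, v⟫_ℝ = ⟪(NormedSpace.exp S) (b k), v⟫_ℝ := by
          rw [h1, real_inner_smul_left]
      _ = ⟪b k, (NormedSpace.exp S) v⟫_ℝ := hexpsym (b k) v
      _ = Real.exp c * ⟪b k, v⟫_ℝ := by rw [hv, real_inner_smul_right]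
  have hk' : ∀ k, μ k * ⟪b k, v⟫_ℝ = c * ⟪b k, v⟫_ℝ := by
    intro k
    rcases eq_or_ne (⟪b k, v⟫_ℝ) 0 with h0 | h0
    · rw [h0, mul_zero, mul_zero]
    · have := mul_right_cancel₀ h0 (hk k)
      rw [Real.exp_injective this]
  calc S v = S (∑ k, ⟪b k, v⟫_ℝ • b k) := by rw [b.sum_repr']
    _ = ∑ k, ⟪b k, v⟫_ℝ • S (b k) := by rw [map_sum]; simp_rw [map_smul]
    _ = ∑ k, (μ k * ⟪b k, v⟫_ℝ) • b k := by
        refine Finset.sum_congr rfl fun k _ => ?_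
        rw [hb k, smul_smul, mul_comm]
    _ = ∑ k, c • (⟪b k, v⟫_ℝ • b k) := by
        refine Finset.sum_congr rfl fun k _ => ?_
        rw [hk' k, smul_smul]
    _ = c • v := by rw [← Finset.smul_sum, b.sum_repr']

private lemma selfadjoint_exp_inj (S₁ S₂ : W →L[ℝ] W) (h₁ : IsSelfAdjoint S₁)
    (h₂ : IsSelfAdjoint S₂) (h : NormedSpace.exp S₁ = NormedSpace.exp S₂) : S₁ = S₂ := by
  have hsym₁ : (S₁ : W →ₗ[ℝ] W).IsSymmetric :=
    ContinuousLinearMap.isSelfAdjoint_iff_isSymmetric.mp h₁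
  let b := hsym₁.eigenvectorBasis rfl
  let lam := hsym₁.eigenvalues rfl
  have hb : ∀ i, S₁ (b i) = lam i • b i := fun i =>
    hsym₁.apply_eigenvectorBasis rfl i
  have hb2 : ∀ i, S₂ (b i) = lam i • b i := by
    intro i
    refine eigen_of_exp S₂ h₂ (b i) (lam i) ?_
    rw [← h]
    exact exp_apply_eigen S₁ (b i) (lam i) (hb i)
  refine ContinuousLinearMap.ext fun w => ?_
  rw [← b.sum_repr' w, map_sum, map_sum]
  refine Finset.sum_congr rfl fun i _ => ?_
  rw [map_smul, map_smul, hb i, hb2 i]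

private lemma exp_mul_exp_neg (Z : W →L[ℝ] W) :
    NormedSpace.exp Z * NormedSpace.exp (-Z) = 1 := by
  letI : NormedAlgebra ℚ (W →L[ℝ] W) := NormedAlgebra.restrictScalars ℚ ℝ _
  rw [← NormedSpace.exp_add_of_commute (Commute.neg_right (Commute.refl Z)), add_neg_cancel,
    NormedSpace.exp_zero]

private lemma exp_neg_mul_exp (Z : W →L[ℝ] W) :
    NormedSpace.exp (-Z) * NormedSpace.exp Z = 1 := by
  letI : NormedAlgebra ℚ (W →L[ℝ] W) := NormedAlgebra.restrictScalars ℚ ℝ _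
  rw [← NormedSpace.exp_add_of_commute (Commute.neg_left (Commute.refl Z)), neg_add_cancel,
    NormedSpace.exp_zero]

private lemma exp_comp_exp_neg (Z : W →L[ℝ] W) :
    (NormedSpace.exp Z).comp (NormedSpace.exp (-Z)) = 1 := by
  rw [← ContinuousLinearMap.mul_def]; exact exp_mul_exp_neg Z

private lemma exp_neg_comp_exp (Z : W →L[ℝ] W) :
    (NormedSpace.exp (-Z)).comp (NormedSpace.exp Z) = 1 := by
  rw [← ContinuousLinearMap.mul_def]; exact exp_neg_mul_exp Z

end Aux

/-- For finite-dimensional real inner product spaces `V`, `W`, the map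
`(A, Z) ↦ A ∘ exp (-Z)`, from (linear isometric embeddings `W → V`) × (self-adjoint
endomorphisms of `W`) to `Hom(W, V)`, is injective, and its image is exactly the set of
injective linear maps `W → V`. -/
theorem stmt4 {V W : Type*} [NormedAddCommGroup V] [InnerProductSpace ℝ V]
    [FiniteDimensional ℝ V] [NormedAddCommGroup W] [InnerProductSpace ℝ W]
    [FiniteDimensional ℝ W] :
    (∀ (A₁ A₂ : W →L[ℝ] V) (Z₁ Z₂ : W →L[ℝ] W),
        (∀ w w' : W, (inner ℝ (A₁ w) (A₁ w') : ℝ) = inner ℝ w w') →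
        (∀ w w' : W, (inner ℝ (A₂ w) (A₂ w') : ℝ) = inner ℝ w w') →
        ContinuousLinearMap.adjoint Z₁ = Z₁ → ContinuousLinearMap.adjoint Z₂ = Z₂ →
        A₁.comp (NormedSpace.exp (-Z₁)) = A₂.comp (NormedSpace.exp (-Z₂)) →
        A₁ = A₂ ∧ Z₁ = Z₂) ∧
    (∀ B : W →L[ℝ] V, Function.Injective ⇑B ↔
        ∃ (A : W →L[ℝ] V) (Z : W →L[ℝ] W),
          (∀ w w' : W, (inner ℝ (A w) (A w') : ℝ) = inner ℝ w w') ∧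
          ContinuousLinearMap.adjoint Z = Z ∧ B = A.comp (NormedSpace.exp (-Z))) := by
  constructor
  · -- injectivity of the parametrization
    intro A₁ A₂ Z₁ Z₂ hA₁ hA₂ hZ₁ hZ₂ h
    have hsaZ₁ : IsSelfAdjoint Z₁ := ContinuousLinearMap.isSelfAdjoint_iff'.mpr hZ₁
    have hsaZ₂ : IsSelfAdjoint Z₂ := ContinuousLinearMap.isSelfAdjoint_iff'.mpr hZ₂
    have hsymE₁ :=
      ContinuousLinearMap.isSelfAdjoint_iff_isSymmetric.mp (hsaZ₁.neg.exp)
    have hsymE₂ :=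
      ContinuousLinearMap.isSelfAdjoint_iff_isSymmetric.mp (hsaZ₂.neg.exp)
    have happ : ∀ w, A₁ (NormedSpace.exp (-Z₁) w) = A₂ (NormedSpace.exp (-Z₂) w) := by
      intro w
      have := ContinuousLinearMap.ext_iff.mp h w
      simpa using this
    have hEE : ∀ w w', ⟪NormedSpace.exp (-Z₁) w, NormedSpace.exp (-Z₁) w'⟫_ℝ
        = ⟪NormedSpace.exp (-Z₂) w, NormedSpace.exp (-Z₂) w'⟫_ℝ := by
      intro w w'
      rw [← hA₁, ← hA₂, happ w, happ w']
    have hsq : NormedSpace.exp (-Z₁ + -Z₁) = NormedSpace.exp (-Z₂ + -Z₂) := by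
      letI : NormedAlgebra ℚ (W →L[ℝ] W) := NormedAlgebra.restrictScalars ℚ ℝ _
      rw [NormedSpace.exp_add_of_commute (Commute.refl _),
        NormedSpace.exp_add_of_commute (Commute.refl _)]
      refine ContinuousLinearMap.ext fun w => ?_
      apply ext_inner_left ℝ
      intro v
      rw [ContinuousLinearMap.mul_apply, ContinuousLinearMap.mul_apply]
      calc ⟪v, NormedSpace.exp (-Z₁) (NormedSpace.exp (-Z₁) w)⟫_ℝ
          = ⟪NormedSpace.exp (-Z₁) v, NormedSpace.exp (-Z₁) w⟫_ℝ := (hsymE₁ v _).symm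
        _ = ⟪NormedSpace.exp (-Z₂) v, NormedSpace.exp (-Z₂) w⟫_ℝ := hEE v w
        _ = ⟪v, NormedSpace.exp (-Z₂) (NormedSpace.exp (-Z₂) w)⟫_ℝ := hsymE₂ v _
    have hz : (-Z₁ + -Z₁ : W →L[ℝ] W) = -Z₂ + -Z₂ :=
      selfadjoint_exp_inj _ _ (hsaZ₁.neg.add hsaZ₁.neg) (hsaZ₂.neg.add hsaZ₂.neg) hsq
    have hZeq : Z₁ = Z₂ := by
      have h2 : -((2:ℝ) • Z₁) = -((2:ℝ) • Z₂) := by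
        rw [two_smul, two_smul, neg_add, neg_add]
        exact hz
      exact smul_right_injective _ two_ne_zero (neg_injective h2)
    subst hZeq
    refine ⟨?_, rfl⟩
    refine ContinuousLinearMap.ext fun w => ?_
    calc A₁ w = A₁ (((NormedSpace.exp (-Z₁)).comp (NormedSpace.exp Z₁)) w) := by
          rw [exp_neg_comp_exp]; rfl
      _ = A₁ (NormedSpace.exp (-Z₁) (NormedSpace.exp Z₁ w)) := rfl
      _ = A₂ (NormedSpace.exp (-Z₁) (NormedSpace.exp Z₁ w)) := happ _
      _ = A₂ (((NormedSpace.exp (-Z₁)).comp (NormedSpace.exp Z₁)) w) := rfl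
      _ = A₂ w := by rw [exp_neg_comp_exp]; rfl
  · intro B
    constructor
    · -- existence of the decomposition for injective B
      intro hB
      classical
      have hPsa : IsSelfAdjoint ((ContinuousLinearMap.adjoint B).comp B) := by
        rw [ContinuousLinearMap.isSelfAdjoint_iff', ContinuousLinearMap.adjoint_comp,
          ContinuousLinearMap.adjoint_adjoint]
      set P := (ContinuousLinearMap.adjoint B).comp B with hPdef
      have hPsym : (P : W →ₗ[ℝ] W).IsSymmetric :=
        ContinuousLinearMap.isSelfAdjoint_iff_isSymmetric.mp hPsa
      let b := hPsym.eigenvectorBasis rfl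
      let μ := hPsym.eigenvalues rfl
      have hb : ∀ i, P (b i) = μ i • b i := fun i =>
        hPsym.apply_eigenvectorBasis rfl i
      have hPB : ∀ x y : W, ⟪P x, y⟫_ℝ = ⟪B x, B y⟫_ℝ := fun x y =>
        ContinuousLinearMap.adjoint_inner_left B y (B x)
      have hbne : ∀ i, (b i : W) ≠ 0 := fun i => b.toBasis.ne_zero i
      have hμ : ∀ i, 0 < μ i := by
        intro i
        have h1 : ⟪P (b i), b i⟫_ℝ = μ i := by
          rw [hb i, real_inner_smul_left, real_inner_self_eq_norm_sq, b.orthonormal.1 i]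
          ring
        have h2 : B (b i) ≠ 0 := by
          intro hz
          exact hbne i (hB (by simpa using hz))
        have h3 : 0 < ⟪B (b i), B (b i)⟫_ℝ := by
          rw [real_inner_self_eq_norm_sq]
          exact pow_pos (norm_pos_iff.mpr h2) 2
        rw [← h1, hPB]
        exact h3
      let c : _ → ℝ := fun i => -(Real.log (μ i)) / 2
      let Z : W →L[ℝ] W := ∑ i, c i • ((innerSL ℝ (b i)).smulRight (b i))
      have hZapply : ∀ w, Z w = ∑ i, (c i * ⟪b i, w⟫_ℝ) • b i := by
        intro w
        simp only [Z, ContinuousLinearMap.sum_apply, ContinuousLinearMap.smul_apply,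
          ContinuousLinearMap.smulRight_apply, innerSL_apply_apply, smul_smul]
      have hite : ∀ i j, ⟪b i, b j⟫_ℝ = if i = j then 1 else 0 := fun i j =>
        orthonormal_iff_ite.mp b.orthonormal i j
      have hZb : ∀ j, Z (b j) = c j • b j := by
        intro j
        rw [hZapply]
        rw [Finset.sum_eq_single j]
        · rw [hite j j, if_pos rfl, mul_one]
        · intro i _ hij
          rw [hite i j, if_neg hij, mul_zero, zero_smul]
        · intro hj
          exact absurd (Finset.mem_univ j) hj
      have hZsa : IsSelfAdjoint Z := by
        rw [ContinuousLinearMap.isSelfAdjoint_iff_isSymmetric]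
        intro x y
        simp only [ContinuousLinearMap.coe_coe]
        rw [hZapply, hZapply, sum_inner, inner_sum]
        refine Finset.sum_congr rfl fun i _ => ?_
        rw [real_inner_smul_left, real_inner_smul_right, real_inner_comm x (b i),
          real_inner_comm y (b i)]
        ring
      have hZadj : ContinuousLinearMap.adjoint Z = Z :=
        ContinuousLinearMap.isSelfAdjoint_iff'.mp hZsa
      have hexpZb : ∀ j, (NormedSpace.exp Z) (b j) = Real.exp (c j) • b j := fun j =>
        exp_apply_eigen Z (b j) (c j) (hZb j)
      have hsymE :=
        ContinuousLinearMap.isSelfAdjoint_iff_isSymmetric.mp (hZsa.exp)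
      let A := B.comp (NormedSpace.exp Z)
      have hscal : ∀ j, Real.exp (c j) * μ j * Real.exp (c j) = 1 := by
        intro j
        have hexp2 : Real.exp (c j) * Real.exp (c j) = (μ j)⁻¹ := by
          rw [← Real.exp_add]
          have hcc : c j + c j = -Real.log (μ j) := by
            show -(Real.log (μ j)) / 2 + -(Real.log (μ j)) / 2 = -Real.log (μ j)
            ring
          rw [hcc, Real.exp_neg, Real.exp_log (hμ j)]
        calc Real.exp (c j) * μ j * Real.exp (c j)
            = (Real.exp (c j) * Real.exp (c j)) * μ j := by ring
          _ = (μ j)⁻¹ * μ j := by rw [hexp2]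
          _ = 1 := inv_mul_cancel₀ (hμ j).ne'
      have hkeyb : ∀ j, (NormedSpace.exp Z) (P ((NormedSpace.exp Z) (b j))) = b j := by
        intro j
        rw [hexpZb j, map_smul, hb j, map_smul, map_smul, hexpZb j, smul_smul, smul_smul,
          hscal j, one_smul]
      have hkey : ∀ w, (NormedSpace.exp Z) (P ((NormedSpace.exp Z) w)) = w := by
        intro w
        conv_rhs => rw [← b.sum_repr' w]
        conv_lhs => rw [← b.sum_repr' w]
        rw [map_sum, map_sum, map_sum]
        refine Finset.sum_congr rfl fun j _ => ?_
        rw [map_smul, map_smul, map_smul, hkeyb j]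
      have hAinner : ∀ w w', ⟪A w, A w'⟫_ℝ = ⟪w, w'⟫_ℝ := by
        intro w w'
        calc ⟪A w, A w'⟫_ℝ
            = ⟪B (NormedSpace.exp Z w), B (NormedSpace.exp Z w')⟫_ℝ := rfl
          _ = ⟪P (NormedSpace.exp Z w), NormedSpace.exp Z w'⟫_ℝ := (hPB _ _).symm
          _ = ⟪NormedSpace.exp Z (P (NormedSpace.exp Z w)), w'⟫_ℝ :=
              (hsymE (P (NormedSpace.exp Z w)) w').symm
          _ = ⟪w, w'⟫_ℝ := by rw [hkey w]
      refine ⟨A, Z, hAinner, hZadj, ?_⟩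
      refine ContinuousLinearMap.ext fun w => ?_
      calc B w = B (((NormedSpace.exp Z).comp (NormedSpace.exp (-Z))) w) := by
            rw [exp_comp_exp_neg]; rfl
        _ = A (NormedSpace.exp (-Z) w) := rfl
        _ = (A.comp (NormedSpace.exp (-Z))) w := rfl
    · -- any map of this form is injective
      rintro ⟨A, Z, hA, hZ, rfl⟩
      have hAinj : Function.Injective A := by
        intro x y hxy
        have h0 : ⟪x - y, x - y⟫_ℝ = 0 := by
          rw [← hA, map_sub, hxy, sub_self, inner_zero_left]
        exact sub_eq_zero.mp (inner_self_eq_zero.mp h0)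
      have hEinj : Function.Injective ⇑(NormedSpace.exp (-Z)) := by
        intro x y hxy
        calc x = ((NormedSpace.exp Z).comp (NormedSpace.exp (-Z))) x := by
              rw [exp_comp_exp_neg]; rfl
          _ = NormedSpace.exp Z (NormedSpace.exp (-Z) x) := rfl
          _ = NormedSpace.exp Z (NormedSpace.exp (-Z) y) := by rw [hxy]
          _ = ((NormedSpace.exp Z).comp (NormedSpace.exp (-Z))) y := rfl
          _ = y := by rw [exp_comp_exp_neg]; rfl
      intro x y hxy
      simp only [ContinuousLinearMap.comp_apply] at hxy
      exact hEinj (hAinj hxy)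
end

section
/- Let W, V be finite-dimensional complex inner product spaces, X skew-adjoint on W, Y : W → V linear. With C = X/2 + Y*Y/4, g = (C - 1)(C + 1)⁻¹ and h = Y(1 - g)/2, the map (g, h) : W → W ⊕ V satisfies g*g + h*h = 1, i.e., it is a linear isometric embedding. -/
local notation "⟪" x ", " y "⟫c" => @inner ℂ _ _ x y

set_option maxHeartbeats 1000000 in
open ContinuousLinearMap in
/-- With `C = X/2 + Y*Y/4`, `g = (C-1)(C+1)⁻¹` and `h = Y(1-g)/2`, the map
`(g, h) : W → W ⊕ V` satisfies `g*g + h*h = 1`, i.e. it is a linear isometric embedding. -/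
theorem stmt7 {W V : Type*} [NormedAddCommGroup W] [InnerProductSpace ℂ W]
    [FiniteDimensional ℂ W] [NormedAddCommGroup V] [InnerProductSpace ℂ V]
    [FiniteDimensional ℂ V]
    (X : W →L[ℂ] W) (hX : ContinuousLinearMap.adjoint X = -X) (Y : W →L[ℂ] V) :
    let C : W →L[ℂ] W :=
      (1 / 2 : ℂ) • X + (1 / 4 : ℂ) • ((ContinuousLinearMap.adjoint Y).comp Y)
    let g : W →L[ℂ] W := (C - 1) * Ring.inverse (C + 1)
    let h : W →L[ℂ] V := (1 / 2 : ℂ) • (Y.comp (1 - g))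
    ContinuousLinearMap.adjoint g * g + (ContinuousLinearMap.adjoint h).comp h = 1 := by
  intro C g h
  set D : W →L[ℂ] W := (ContinuousLinearMap.adjoint Y).comp Y with hD
  have hDstar : star D = D := by
    rw [star_eq_adjoint, hD, adjoint_comp, adjoint_adjoint]
  have hCstar : star C + C = (1 / 2 : ℂ) • D := by
    show star ((1/2 : ℂ) • X + (1/4 : ℂ) • D) + _ = _
    rw [star_add, star_smul, star_smul, hDstar, star_eq_adjoint, hX]
    rw [show (star (1/2 : ℂ)) = (1/2 : ℂ) by norm_num,
        show (star (1/4 : ℂ)) = (1/4 : ℂ) by norm_num]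
    module
  -- injectivity of C + 1
  have hker : ∀ x : W, (C + 1) x = 0 → x = 0 := by
    intro x hx
    have h1 : C x = -x := by
      have : C x + x = 0 := by simpa using hx
      linear_combination (norm := abel) this
    have hXim : (⟪x, X x⟫c).re = 0 := by
      have h2 : ⟪x, X x⟫c = -(starRingEnd ℂ ⟪x, X x⟫c) := by
        calc ⟪x, X x⟫c = ⟪(ContinuousLinearMap.adjoint X) x, x⟫c :=
              (adjoint_inner_left X x x).symm
          _ = -⟪X x, x⟫c := by rw [hX]; simp
          _ = -(starRingEnd ℂ ⟪x, X x⟫c) := by rw [inner_conj_symm]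
      have h3 : (⟪X x, x⟫c).re = (⟪x, X x⟫c).re := by
        rw [← inner_conj_symm x (X x)]
        exact Complex.conj_re _
      have := congrArg Complex.re h2
      simp [h3] at this
      linarith
    have hDpos : (⟪x, D x⟫c).re = ‖Y x‖ ^ 2 := by
      rw [hD]
      have h4 : ⟪x, ((ContinuousLinearMap.adjoint Y).comp Y) x⟫c = ⟪Y x, Y x⟫c := by
        simp [ContinuousLinearMap.comp_apply, adjoint_inner_right]
      rw [h4]
      simpa using @inner_self_eq_norm_sq ℂ _ _ _ _ (Y x)
    have hre : (⟪x, C x⟫c).re = (1/2) * (⟪x, X x⟫c).re + (1/4) * (⟪x, D x⟫c).re := by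
      show (⟪x, ((1/2 : ℂ) • X + (1/4 : ℂ) • D) x⟫c).re = _
      simp [inner_add_right, inner_smul_right]
    have hneg : (⟪x, C x⟫c).re = -(‖x‖ ^ 2) := by
      rw [h1, inner_neg_right, Complex.neg_re]
      have := @inner_self_eq_norm_sq ℂ _ _ _ _ x
      simp at this
      rw [show (⟪x, x⟫c).re = ‖x‖ ^ 2 by simpa using @inner_self_eq_norm_sq ℂ _ _ _ _ x]
    have hx0 : ‖x‖ ^ 2 ≤ 0 := by
      rw [hre, hXim, hDpos] at hneg
      nlinarith [sq_nonneg ‖Y x‖]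
    have : ‖x‖ = 0 := by nlinarith [norm_nonneg x, sq_nonneg ‖x‖]
    simpa using this
  have hA : IsUnit (C + 1) := by
    rw [ContinuousLinearMap.isUnit_iff_bijective]
    have hinj : Function.Injective (⇑(C + 1)) := by
      intro a b hab
      have := hker (a - b) (by rw [map_sub, hab, sub_self])
      exact sub_eq_zero.mp this
    exact ⟨hinj, (LinearMap.injective_iff_surjective
      (f := (C + 1 : W →L[ℂ] W).toLinearMap)).mp hinj⟩
  set B : W →L[ℂ] W := Ring.inverse (C + 1) with hB
  have hAB : (C + 1) * B = 1 := Ring.mul_inverse_cancel _ hA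
  have hBA : B * (C + 1) = 1 := Ring.inverse_mul_cancel _ hA
  have hgdef : g = (C - 1) * B := rfl
  have h1g : (1 : W →L[ℂ] W) - g = B + B := by
    calc (1 : W →L[ℂ] W) - g = (C + 1) * B - (C - 1) * B := by rw [hAB, ← hgdef]
      _ = B + B := by noncomm_ring
  have hh : h = Y.comp B := by
    show (1/2 : ℂ) • (Y.comp (1 - g)) = _
    rw [h1g]
    ext w
    simp [ContinuousLinearMap.comp_apply, ContinuousLinearMap.smul_apply,
      ContinuousLinearMap.add_apply, map_add, smul_add]
    module
  -- make everything opaque now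
  clear_value g h B C D
  subst hh hgdef
  have hstarB : star B * star (C + 1) = 1 := by
    rw [← star_mul, hAB, star_one]
  have key : (star C - 1) * (C - 1) + D = star (C + 1) * (C + 1) := by
    have hDsum : D = (star C + C) + (star C + C) := by
      rw [hCstar]; module
    rw [star_add, star_one]
    nth_rewrite 1 [hDsum]
    noncomm_ring
  have hgstar : ContinuousLinearMap.adjoint ((C - 1) * B) = star B * (star C - 1) := by
    rw [← star_eq_adjoint, star_mul, star_sub, star_one]
  have hhstar : (ContinuousLinearMap.adjoint (Y.comp B)).comp (Y.comp B)
      = star B * D * B := by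
    rw [adjoint_comp, hD, ← star_eq_adjoint]
    ext w
    simp [ContinuousLinearMap.comp_apply, ContinuousLinearMap.mul_apply]
  rw [hgstar, hhstar]
  calc star B * (star C - 1) * ((C - 1) * B) + star B * D * B
      = star B * ((star C - 1) * (C - 1) + D) * B := by noncomm_ring
    _ = star B * (star (C + 1) * (C + 1)) * B := by rw [key]
    _ = (star B * star (C + 1)) * ((C + 1) * B) := by noncomm_ring
    _ = 1 := by rw [hstarB, hAB, one_mul]
end

section
/- Every ℝ-algebra automorphism of ℍ fixes the reals, restricts to an isometry of the 3-dimensional subspace span_ℝ{i, j, k} (with inner product ⟨x, y⟩ = Re(conj(x)·y)), and this restriction has determinant 1; the resulting map Aut_ℝ(ℍ) → SO(3) is a group isomorphism. -/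
open Quaternion

/-- The standard basis `(i, j, k)` of the pure quaternions. -/
noncomputable def pureBasis : Fin 3 → ℍ[ℝ] :=
  ![⟨0, 1, 0, 0⟩, ⟨0, 0, 1, 0⟩, ⟨0, 0, 0, 1⟩]

/-- Coordinates of a quaternion with respect to `(i, j, k)`. -/
noncomputable def pureCoord (m : Fin 3) (x : ℍ[ℝ]) : ℝ :=
  ![x.imI, x.imJ, x.imK] m

namespace Stmt14Aux

noncomputable def qI : ℍ[ℝ] := ⟨0,1,0,0⟩
noncomputable def qJ : ℍ[ℝ] := ⟨0,0,1,0⟩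
noncomputable def qK : ℍ[ℝ] := ⟨0,0,0,1⟩

lemma pb0 : pureBasis 0 = qI := by rfl
lemma pb1 : pureBasis 1 = qJ := by rfl
lemma pb2 : pureBasis 2 = qK := by rfl

lemma pb2' : pureBasis ⟨2, by omega⟩ = qK := pb2

lemma qI_mul_qJ : qI * qJ = qK := by ext <;> simp only [Quaternion.re_mul, Quaternion.imI_mul, Quaternion.imJ_mul, Quaternion.imK_mul] <;> simp [qI, qJ, qK]
lemma qJ_mul_qK : qJ * qK = qI := by ext <;> simp only [Quaternion.re_mul, Quaternion.imI_mul, Quaternion.imJ_mul, Quaternion.imK_mul] <;> simp [qI, qJ, qK]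
lemma qK_mul_qI : qK * qI = qJ := by ext <;> simp only [Quaternion.re_mul, Quaternion.imI_mul, Quaternion.imJ_mul, Quaternion.imK_mul] <;> simp [qI, qJ, qK]
lemma qI_mul_qI : qI * qI = -1 := by ext <;> simp only [Quaternion.re_mul, Quaternion.imI_mul, Quaternion.imJ_mul, Quaternion.imK_mul] <;> simp [qI]
lemma qJ_mul_qJ : qJ * qJ = -1 := by ext <;> simp only [Quaternion.re_mul, Quaternion.imI_mul, Quaternion.imJ_mul, Quaternion.imK_mul] <;> simp [qJ]
lemma qK_mul_qK : qK * qK = -1 := by ext <;> simp only [Quaternion.re_mul, Quaternion.imI_mul, Quaternion.imJ_mul, Quaternion.imK_mul] <;> simp [qK]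

lemma decomp (x : ℍ[ℝ]) : x = x.re • 1 + x.imI • qI + x.imJ • qJ + x.imK • qK := by
  ext <;> simp <;> simp [qI, qJ, qK]

lemma pure_decomp (x : ℍ[ℝ]) (hx : x.re = 0) :
    x = x.imI • qI + x.imJ • qJ + x.imK • qK := by
  ext <;> simp <;> simp [qI, qJ, qK, hx]

lemma tau_coe (τ : ℍ[ℝ] ≃ₐ[ℝ] ℍ[ℝ]) (r : ℝ) : τ ((r : ℝ) : ℍ[ℝ]) = ((r : ℝ) : ℍ[ℝ]) := by
  have h : ((r : ℝ) : ℍ[ℝ]) = algebraMap ℝ ℍ[ℝ] r := rfl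
  rw [h]; exact τ.commutes r

lemma re_sq_zero (q : ℍ[ℝ]) (s : ℝ) (hs : 0 ≤ s) (h : q * q = (⟨-s,0,0,0⟩ : ℍ[ℝ])) :
    q.re = 0 := by
  have h1 : q.re ^ 2 - (q.imI^2 + q.imJ^2 + q.imK^2) = -s := by
    have := congrArg QuaternionAlgebra.re h
    simp [Quaternion.re_mul] at this
    ring_nf; ring_nf at this; linarith [this]
  have h2 : q.re * q.imI = 0 := by
    have := congrArg QuaternionAlgebra.imI h
    simp [Quaternion.imI_mul] at this
    linarith [this]
  have h3 : q.re * q.imJ = 0 := by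
    have := congrArg QuaternionAlgebra.imJ h
    simp [Quaternion.imJ_mul] at this
    linarith [this]
  have h4 : q.re * q.imK = 0 := by
    have := congrArg QuaternionAlgebra.imK h
    simp [Quaternion.imK_mul] at this
    linarith [this]
  have key : q.re ^ 4 = 0 := by
    nlinarith [sq_nonneg q.re, sq_nonneg q.imI, sq_nonneg q.imJ, sq_nonneg q.imK]
  exact pow_eq_zero_iff (n := 4) (by norm_num) |>.mp key

lemma pure_of (τ : ℍ[ℝ] ≃ₐ[ℝ] ℍ[ℝ]) (x : ℍ[ℝ]) (hx : x.re = 0) : (τ x).re = 0 := by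
  set s : ℝ := x.imI^2 + x.imJ^2 + x.imK^2 with hs
  have hco : ((-s : ℝ) : ℍ[ℝ]) = (⟨-s,0,0,0⟩ : ℍ[ℝ]) := rfl
  have hsq : x * x = (⟨-s,0,0,0⟩ : ℍ[ℝ]) := by ext <;> simp [hx, hs] <;> ring
  have h : τ x * τ x = (⟨-s,0,0,0⟩ : ℍ[ℝ]) := by
    rw [← map_mul, hsq, ← hco, tau_coe, hco]
  exact re_sq_zero _ s (by positivity) h

lemma re_map (τ : ℍ[ℝ] ≃ₐ[ℝ] ℍ[ℝ]) (x : ℍ[ℝ]) : (τ x).re = x.re := by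
  have hp : (x - (x.re : ℍ[ℝ])).re = 0 := by simp
  have := pure_of τ _ hp
  rw [map_sub, tau_coe] at this
  simp at this
  linarith [this]

lemma star_map (τ : ℍ[ℝ] ≃ₐ[ℝ] ℍ[ℝ]) (x : ℍ[ℝ]) : star (τ x) = τ (star x) := by
  have hst : ∀ q : ℍ[ℝ], star q = ((2 * q.re : ℝ) : ℍ[ℝ]) - q := by
    intro q
    have : ((2 * q.re : ℝ) : ℍ[ℝ]) = ⟨2*q.re,0,0,0⟩ := rfl
    ext <;> simp <;> ring
  rw [hst, hst, re_map, map_sub]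
  congr 1
  exact (tau_coe τ (2 * x.re)).symm

lemma inner_map (τ : ℍ[ℝ] ≃ₐ[ℝ] ℍ[ℝ]) (x y : ℍ[ℝ]) :
    (star (τ x) * τ y).re = (star x * y).re := by
  rw [star_map, ← map_mul, re_map]

/-- The matrix of an automorphism on the pure part. -/
noncomputable def Mmat (τ : ℍ[ℝ] ≃ₐ[ℝ] ℍ[ℝ]) : Matrix (Fin 3) (Fin 3) ℝ :=
  Matrix.of fun m n => pureCoord m (τ (pureBasis n))

lemma Mmat_apply (τ : ℍ[ℝ] ≃ₐ[ℝ] ℍ[ℝ]) (m n : Fin 3) :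
    Mmat τ m n = pureCoord m (τ (pureBasis n)) := rfl

lemma Mmat_mem (τ : ℍ[ℝ] ≃ₐ[ℝ] ℍ[ℝ]) : Mmat τ ∈ Matrix.specialOrthogonalGroup (Fin 3) ℝ := by
  have har : (τ qI).re = 0 := pure_of τ _ (by simp [qI])
  have hbr : (τ qJ).re = 0 := pure_of τ _ (by simp [qJ])
  have hcr : (τ qK).re = 0 := pure_of τ _ (by simp [qK])
  have haa : τ qI * τ qI = -1 := by rw [← map_mul, qI_mul_qI, map_neg, map_one]
  have hbb : τ qJ * τ qJ = -1 := by rw [← map_mul, qJ_mul_qJ, map_neg, map_one]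
  have hcc : τ qK * τ qK = -1 := by rw [← map_mul, qK_mul_qK, map_neg, map_one]
  have hab : τ qI * τ qJ = τ qK := by rw [← map_mul, qI_mul_qJ]
  have hbc : τ qJ * τ qK = τ qI := by rw [← map_mul, qJ_mul_qK]
  set a := τ qI with ha
  set b := τ qJ with hb
  set c := τ qK with hc
  have haare := congrArg QuaternionAlgebra.re haa
  have haaI := congrArg QuaternionAlgebra.imI haa
  have haaJ := congrArg QuaternionAlgebra.imJ haa
  have haaK := congrArg QuaternionAlgebra.imK haa
  have hbbre := congrArg QuaternionAlgebra.re hbb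
  have hbbI := congrArg QuaternionAlgebra.imI hbb
  have hbbJ := congrArg QuaternionAlgebra.imJ hbb
  have hbbK := congrArg QuaternionAlgebra.imK hbb
  have hccre := congrArg QuaternionAlgebra.re hcc
  have habre := congrArg QuaternionAlgebra.re hab
  have habI := congrArg QuaternionAlgebra.imI hab
  have habJ := congrArg QuaternionAlgebra.imJ hab
  have habK := congrArg QuaternionAlgebra.imK hab
  have hbcre := congrArg QuaternionAlgebra.re hbc
  have hbcI := congrArg QuaternionAlgebra.imI hbc
  have hbcJ := congrArg QuaternionAlgebra.imJ hbc
  have hbcK := congrArg QuaternionAlgebra.imK hbc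
  simp only [Quaternion.re_mul, Quaternion.imI_mul, Quaternion.imJ_mul, Quaternion.imK_mul,
    Quaternion.re_neg, Quaternion.imI_neg, Quaternion.imJ_neg, Quaternion.imK_neg,
    Quaternion.re_one, Quaternion.imI_one, Quaternion.imJ_one, Quaternion.imK_one, neg_zero]
    at haare haaI haaJ haaK hbbre hbbI hbbJ hbbK hccre habre habI habJ habK hbcre hbcI hbcJ hbcK
  rw [Matrix.mem_specialOrthogonalGroup_iff]
  constructor
  · rw [Matrix.mem_unitaryGroup_iff']
    ext m n
    fin_cases m <;> fin_cases n <;>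
      simp only [Matrix.mul_apply, Fin.sum_univ_three, Matrix.star_apply, star_trivial,
        Mmat_apply, pb0, pb1, pb2, pureCoord, ← ha, ← hb, ← hc, Matrix.one_apply,
        Matrix.cons_val_zero, Matrix.cons_val_one, Matrix.head_cons, Fin.mk_zero, Fin.mk_one,
        Matrix.cons_val_two, Matrix.tail_cons, pb2'] <;>
      norm_num [Fin.ext_iff]
    · linear_combination a.re * har - haare
    · linear_combination b.re * har - hcr - habre
    · linear_combination c.re * har + hbr - b.re * haare + b.imI * haaI + b.imJ * haaJ +
        b.imK * haaK + a.re * habre - a.imI * habI - a.imJ * habJ - a.imK * habK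
    · linear_combination b.re * har - hcr - habre
    · linear_combination b.re * hbr - hbbre
    · linear_combination har + c.re * hbr - a.re * hbbre + a.imI * hbbI + a.imJ * hbbJ +
        a.imK * hbbK + b.re * habre - b.imI * habI - b.imJ * habJ - b.imK * habK
    · linear_combination c.re * har + hbr - b.re * haare + b.imI * haaI + b.imJ * haaJ +
        b.imK * haaK + a.re * habre - a.imI * habI - a.imJ * habJ - a.imK * habK
    · linear_combination har + c.re * hbr - a.re * hbbre + a.imI * hbbI + a.imJ * hbbJ +
        a.imK * hbbK + b.re * habre - b.imI * habI - b.imJ * habJ - b.imK * habK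
    · linear_combination c.re * hcr - hccre
  · have cross1 : a.imJ * b.imK - a.imK * b.imJ = c.imI := by
      linear_combination habI - b.imI * har - a.imI * hbr
    have cross2 : a.imK * b.imI - a.imI * b.imK = c.imJ := by
      linear_combination habJ - b.imJ * har - a.imJ * hbr
    have cross3 : a.imI * b.imJ - a.imJ * b.imI = c.imK := by
      linear_combination habK - b.imK * har - a.imK * hbr
    rw [Matrix.det_fin_three]
    simp only [Mmat_apply, pb0, pb1, pb2, pureCoord, ← ha, ← hb, ← hc,
      Matrix.cons_val_zero, Matrix.cons_val_one, Matrix.head_cons, Fin.mk_zero, Fin.mk_one,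
      Matrix.cons_val_two, Matrix.tail_cons, pb2']
    linear_combination c.imI * cross1 + c.imJ * cross2 + c.imK * cross3 - hccre + c.re * hcr


open Matrix

lemma pureBasis_re (n : Fin 3) : (pureBasis n).re = 0 := by
  fin_cases n <;> simp [pureBasis]

lemma pureCoord_add (m : Fin 3) (x y : ℍ[ℝ]) :
    pureCoord m (x + y) = pureCoord m x + pureCoord m y := by
  fin_cases m <;> simp [pureCoord]

lemma pureCoord_smul (m : Fin 3) (r : ℝ) (x : ℍ[ℝ]) :
    pureCoord m (r • x) = r * pureCoord m x := by
  fin_cases m <;> simp [pureCoord]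

lemma Mmat_one : Mmat 1 = 1 := by
  ext m n
  fin_cases m <;> fin_cases n <;> simp only [Mmat_apply, AlgEquiv.one_apply] <;>
    simp [Mmat_apply, pureBasis, pureCoord, Matrix.one_apply, Fin.ext_iff]

lemma Mmat_mul (τ σ : ℍ[ℝ] ≃ₐ[ℝ] ℍ[ℝ]) : Mmat (τ * σ) = Mmat τ * Mmat σ := by
  ext m n
  have h0 : (σ (pureBasis n)).re = 0 := pure_of σ _ (pureBasis_re n)
  have hσ : σ (pureBasis n) =
      Mmat σ 0 n • qI + Mmat σ 1 n • qJ + Mmat σ 2 n • qK := by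
    rw [pure_decomp (σ (pureBasis n)) h0]; rfl
  rw [Matrix.mul_apply, Fin.sum_univ_three, Mmat_apply, AlgEquiv.mul_apply, hσ]
  simp only [map_add, _root_.map_smul, pureCoord_add, pureCoord_smul]
  simp only [Mmat_apply, pb0, pb1, pb2]
  ring

lemma Mmat_inj (τ σ : ℍ[ℝ] ≃ₐ[ℝ] ℍ[ℝ]) (h : Mmat τ = Mmat σ) : τ = σ := by
  have hb : ∀ n : Fin 3, τ (pureBasis n) = σ (pureBasis n) := by
    intro n
    have h0 := congrFun (congrFun h 0) n
    have h1 := congrFun (congrFun h 1) n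
    have h2 := congrFun (congrFun h 2) n
    simp only [Mmat_apply, pureCoord, Matrix.cons_val_zero, Matrix.cons_val_one,
      Matrix.head_cons, Matrix.cons_val_two, Matrix.tail_cons] at h0 h1 h2
    ext
    · rw [pure_of τ _ (pureBasis_re n), pure_of σ _ (pureBasis_re n)]
    · exact h0
    · exact h1
    · exact h2
  apply AlgEquiv.ext
  intro x
  conv_lhs => rw [decomp x]
  conv_rhs => rw [decomp x]
  rw [← pb0, ← pb1, ← pb2]
  simp only [map_add, _root_.map_smul, _root_.map_one, hb 0, hb 1, hb 2]

noncomputable def fQ (A : Matrix (Fin 3) (Fin 3) ℝ) : ℍ[ℝ] → ℍ[ℝ] := fun x =>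
  ⟨x.re, A 0 0 * x.imI + A 0 1 * x.imJ + A 0 2 * x.imK,
         A 1 0 * x.imI + A 1 1 * x.imJ + A 1 2 * x.imK,
         A 2 0 * x.imI + A 2 1 * x.imJ + A 2 2 * x.imK⟩

section
variable (A : Matrix (Fin 3) (Fin 3) ℝ)

lemma star_eq_transpose : star A = Aᵀ := by
  ext i j; simp [Matrix.star_apply]

lemma transpose_mem (hA : A ∈ Matrix.specialOrthogonalGroup (Fin 3) ℝ) :
    Aᵀ ∈ Matrix.specialOrthogonalGroup (Fin 3) ℝ := by
  rw [Matrix.mem_specialOrthogonalGroup_iff] at hA ⊢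
  obtain ⟨ho, hdet⟩ := hA
  constructor
  · rw [Matrix.mem_unitaryGroup_iff']
    rw [star_eq_transpose, Matrix.transpose_transpose]
    have := Matrix.mem_unitaryGroup_iff.mp ho
    rwa [star_eq_transpose] at this
  · rw [Matrix.det_transpose]; exact hdet

lemma fQ_mul (hA : A ∈ Matrix.specialOrthogonalGroup (Fin 3) ℝ) (x y : ℍ[ℝ]) :
    fQ A (x * y) = fQ A x * fQ A y := by
  rw [Matrix.mem_specialOrthogonalGroup_iff] at hA
  obtain ⟨ho, hdet⟩ := hA
  have h1 : Aᵀ * A = 1 := by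
    have := Matrix.mem_unitaryGroup_iff'.mp ho
    rwa [star_eq_transpose] at this
  have hadj : A.adjugate = Aᵀ := by
    calc A.adjugate = 1 * A.adjugate := (one_mul _).symm
      _ = Aᵀ * A * A.adjugate := by rw [h1]
      _ = Aᵀ * (A * A.adjugate) := Matrix.mul_assoc _ _ _
      _ = Aᵀ * (A.det • 1) := by rw [Matrix.mul_adjugate]
      _ = Aᵀ := by rw [hdet, one_smul, Matrix.mul_one]
  have n0 : A 0 0 * A 0 0 + A 1 0 * A 1 0 + A 2 0 * A 2 0 = 1 := by
    have := congrFun (congrFun h1 0) 0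
    simpa [Matrix.mul_apply, Fin.sum_univ_three, Matrix.one_apply] using this
  have n1 : A 0 1 * A 0 1 + A 1 1 * A 1 1 + A 2 1 * A 2 1 = 1 := by
    have := congrFun (congrFun h1 1) 1
    simpa [Matrix.mul_apply, Fin.sum_univ_three, Matrix.one_apply] using this
  have n2 : A 0 2 * A 0 2 + A 1 2 * A 1 2 + A 2 2 * A 2 2 = 1 := by
    have := congrFun (congrFun h1 2) 2
    simpa [Matrix.mul_apply, Fin.sum_univ_three, Matrix.one_apply] using this
  have o01 : A 0 0 * A 0 1 + A 1 0 * A 1 1 + A 2 0 * A 2 1 = 0 := by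
    have := congrFun (congrFun h1 0) 1
    simpa [Matrix.mul_apply, Fin.sum_univ_three, Matrix.one_apply] using this
  have o02 : A 0 0 * A 0 2 + A 1 0 * A 1 2 + A 2 0 * A 2 2 = 0 := by
    have := congrFun (congrFun h1 0) 2
    simpa [Matrix.mul_apply, Fin.sum_univ_three, Matrix.one_apply] using this
  have o12 : A 0 1 * A 0 2 + A 1 1 * A 1 2 + A 2 1 * A 2 2 = 0 := by
    have := congrFun (congrFun h1 1) 2
    simpa [Matrix.mul_apply, Fin.sum_univ_three, Matrix.one_apply] using this
  rw [Matrix.adjugate_fin_three] at hadj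
  have adj00 : A 1 1 * A 2 2 - A 1 2 * A 2 1 = A 0 0 := by
    have := congrFun (congrFun hadj 0) 0; simpa using this
  have adj01 : -(A 0 1 * A 2 2) + A 0 2 * A 2 1 = A 1 0 := by
    have := congrFun (congrFun hadj 0) 1; simpa using this
  have adj02 : A 0 1 * A 1 2 - A 0 2 * A 1 1 = A 2 0 := by
    have := congrFun (congrFun hadj 0) 2; simpa using this
  have adj10 : -(A 1 0 * A 2 2) + A 1 2 * A 2 0 = A 0 1 := by
    have := congrFun (congrFun hadj 1) 0; simpa using this
  have adj11 : A 0 0 * A 2 2 - A 0 2 * A 2 0 = A 1 1 := by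
    have := congrFun (congrFun hadj 1) 1; simpa using this
  have adj12 : -(A 0 0 * A 1 2) + A 0 2 * A 1 0 = A 2 1 := by
    have := congrFun (congrFun hadj 1) 2; simpa using this
  have adj20 : A 1 0 * A 2 1 - A 1 1 * A 2 0 = A 0 2 := by
    have := congrFun (congrFun hadj 2) 0; simpa using this
  have adj21 : -(A 0 0 * A 2 1) + A 0 1 * A 2 0 = A 1 2 := by
    have := congrFun (congrFun hadj 2) 1; simpa using this
  have adj22 : A 0 0 * A 1 1 - A 0 1 * A 1 0 = A 2 2 := by
    have := congrFun (congrFun hadj 2) 2; simpa using this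
  ext
  · show (x * y).re = _
    simp only [Quaternion.re_mul]; simp only [fQ]
    linear_combination x.imI*y.imI*n0 + x.imJ*y.imJ*n1 + x.imK*y.imK*n2 +
      (x.imI*y.imJ + x.imJ*y.imI)*o01 + (x.imI*y.imK + x.imK*y.imI)*o02 +
      (x.imJ*y.imK + x.imK*y.imJ)*o12
  · simp only [Quaternion.re_mul, Quaternion.imI_mul, Quaternion.imJ_mul, Quaternion.imK_mul]; simp only [fQ, Quaternion.re_mul, Quaternion.imI_mul, Quaternion.imJ_mul, Quaternion.imK_mul]
    linear_combination (-(x.imJ*y.imK) + x.imK*y.imJ) * adj00 +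
      (x.imI*y.imK - x.imK*y.imI) * adj10 + (-(x.imI*y.imJ) + x.imJ*y.imI) * adj20
  · simp only [Quaternion.re_mul, Quaternion.imI_mul, Quaternion.imJ_mul, Quaternion.imK_mul]; simp only [fQ, Quaternion.re_mul, Quaternion.imI_mul, Quaternion.imJ_mul, Quaternion.imK_mul]
    linear_combination (-(x.imJ*y.imK) + x.imK*y.imJ) * adj01 +
      (x.imI*y.imK - x.imK*y.imI) * adj11 + (-(x.imI*y.imJ) + x.imJ*y.imI) * adj21
  · simp only [Quaternion.re_mul, Quaternion.imI_mul, Quaternion.imJ_mul, Quaternion.imK_mul]; simp only [fQ, Quaternion.re_mul, Quaternion.imI_mul, Quaternion.imJ_mul, Quaternion.imK_mul]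
    linear_combination (-(x.imJ*y.imK) + x.imK*y.imJ) * adj02 +
      (x.imI*y.imK - x.imK*y.imI) * adj12 + (-(x.imI*y.imJ) + x.imJ*y.imI) * adj22

lemma fQ_leftinv (hA : A ∈ Matrix.specialOrthogonalGroup (Fin 3) ℝ) (x : ℍ[ℝ]) :
    fQ Aᵀ (fQ A x) = x := by
  rw [Matrix.mem_specialOrthogonalGroup_iff] at hA
  obtain ⟨ho, _⟩ := hA
  have h1 : Aᵀ * A = 1 := by
    have := Matrix.mem_unitaryGroup_iff'.mp ho
    rwa [star_eq_transpose] at this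
  have n0 : A 0 0 * A 0 0 + A 1 0 * A 1 0 + A 2 0 * A 2 0 = 1 := by
    have := congrFun (congrFun h1 0) 0
    simpa [Matrix.mul_apply, Fin.sum_univ_three, Matrix.one_apply] using this
  have n1 : A 0 1 * A 0 1 + A 1 1 * A 1 1 + A 2 1 * A 2 1 = 1 := by
    have := congrFun (congrFun h1 1) 1
    simpa [Matrix.mul_apply, Fin.sum_univ_three, Matrix.one_apply] using this
  have n2 : A 0 2 * A 0 2 + A 1 2 * A 1 2 + A 2 2 * A 2 2 = 1 := by
    have := congrFun (congrFun h1 2) 2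
    simpa [Matrix.mul_apply, Fin.sum_univ_three, Matrix.one_apply] using this
  have o01 : A 0 0 * A 0 1 + A 1 0 * A 1 1 + A 2 0 * A 2 1 = 0 := by
    have := congrFun (congrFun h1 0) 1
    simpa [Matrix.mul_apply, Fin.sum_univ_three, Matrix.one_apply] using this
  have o02 : A 0 0 * A 0 2 + A 1 0 * A 1 2 + A 2 0 * A 2 2 = 0 := by
    have := congrFun (congrFun h1 0) 2
    simpa [Matrix.mul_apply, Fin.sum_univ_three, Matrix.one_apply] using this
  have o12 : A 0 1 * A 0 2 + A 1 1 * A 1 2 + A 2 1 * A 2 2 = 0 := by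
    have := congrFun (congrFun h1 1) 2
    simpa [Matrix.mul_apply, Fin.sum_univ_three, Matrix.one_apply] using this
  ext
  · rfl
  · simp only [fQ, Matrix.transpose_apply]
    linear_combination x.imI * n0 + x.imJ * o01 + x.imK * o02
  · simp only [fQ, Matrix.transpose_apply]
    linear_combination x.imI * o01 + x.imJ * n1 + x.imK * o12
  · simp only [fQ, Matrix.transpose_apply]
    linear_combination x.imI * o02 + x.imJ * o12 + x.imK * n2

/-- The algebra homomorphism induced by a special orthogonal matrix. -/
noncomputable def fHom (hA : A ∈ Matrix.specialOrthogonalGroup (Fin 3) ℝ) :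
    ℍ[ℝ] →ₐ[ℝ] ℍ[ℝ] where
  toFun := fQ A
  map_one' := by ext <;> simp [fQ]
  map_mul' := fQ_mul A hA
  map_zero' := by ext <;> simp [fQ]
  map_add' x y := by ext <;> simp <;> simp [fQ] <;> ring
  commutes' r := by
    have h : algebraMap ℝ ℍ[ℝ] r = (⟨r,0,0,0⟩ : ℍ[ℝ]) := rfl
    rw [h]; ext <;> simp [fQ]

/-- The algebra automorphism induced by a special orthogonal matrix. -/
noncomputable def fAut (hA : A ∈ Matrix.specialOrthogonalGroup (Fin 3) ℝ) :
    ℍ[ℝ] ≃ₐ[ℝ] ℍ[ℝ] :=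
  AlgEquiv.ofAlgHom (fHom A hA) (fHom Aᵀ (transpose_mem A hA))
    (AlgHom.ext fun x => by
      have := fQ_leftinv Aᵀ (transpose_mem A hA) x
      rwa [Matrix.transpose_transpose] at this)
    (AlgHom.ext fun x => fQ_leftinv A hA x)

lemma fAut_apply (hA : A ∈ Matrix.specialOrthogonalGroup (Fin 3) ℝ) (x : ℍ[ℝ]) :
    fAut A hA x = fQ A x := rfl
end

noncomputable def Phi : (ℍ[ℝ] ≃ₐ[ℝ] ℍ[ℝ]) →* Matrix.specialOrthogonalGroup (Fin 3) ℝ where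
  toFun τ := ⟨Mmat τ, Mmat_mem τ⟩
  map_one' := Subtype.ext Mmat_one
  map_mul' τ σ := Subtype.ext (Mmat_mul τ σ)

lemma Mmat_fAut (A : Matrix (Fin 3) (Fin 3) ℝ)
    (hA : A ∈ Matrix.specialOrthogonalGroup (Fin 3) ℝ) : Mmat (fAut A hA) = A := by
  ext m n
  rw [Mmat_apply]
  fin_cases m <;> fin_cases n <;> simp only [fAut_apply] <;>
    simp [fAut_apply, fQ, pureCoord, pureBasis] <;> norm_num

end Stmt14Aux

theorem stmt14 :
    (∀ (τ : ℍ[ℝ] ≃ₐ[ℝ] ℍ[ℝ]) (r : ℝ), τ (r : ℍ[ℝ]) = (r : ℍ[ℝ])) ∧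
    (∀ (τ : ℍ[ℝ] ≃ₐ[ℝ] ℍ[ℝ]) (x : ℍ[ℝ]), x.re = 0 → (τ x).re = 0) ∧
    (∀ (τ : ℍ[ℝ] ≃ₐ[ℝ] ℍ[ℝ]) (x y : ℍ[ℝ]), x.re = 0 → y.re = 0 →
      (star (τ x) * τ y).re = (star x * y).re) ∧
    ∃ e : (ℍ[ℝ] ≃ₐ[ℝ] ℍ[ℝ]) ≃* Matrix.specialOrthogonalGroup (Fin 3) ℝ,
      ∀ (τ : ℍ[ℝ] ≃ₐ[ℝ] ℍ[ℝ]) (m n : Fin 3),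
        ((e τ : Matrix (Fin 3) (Fin 3) ℝ)) m n = pureCoord m (τ (pureBasis n)) := by
  refine ⟨fun τ r => Stmt14Aux.tau_coe τ r, Stmt14Aux.pure_of,
    fun τ x y _ _ => Stmt14Aux.inner_map τ x y, ?_⟩
  refine ⟨MulEquiv.ofBijective Stmt14Aux.Phi
    ⟨fun τ σ h => Stmt14Aux.Mmat_inj τ σ (congrArg Subtype.val h),
     fun B => ⟨Stmt14Aux.fAut B.1 B.2, Subtype.ext (Stmt14Aux.Mmat_fAut B.1 B.2)⟩⟩, ?_⟩
  intro τ m n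
  rfl
end

section
/- Let W be a finite-dimensional quaternionic inner product space with underlying real inner product space uW (inner product ⟨x,y⟩ = Re[x,y]). The map ζ : W → uW ⊗_ℝ ℍ defined by ζ(x) = (1/2)(x⊗1 - xi⊗i - xj⊗j - xk⊗k) is right ℍ-linear and isometric: [ζ(x), ζ(y)] = [x, y] for all x, y ∈ W. -/
open Quaternion

/-- The standard real basis `(1, i, j, k)` of ℍ. -/
noncomputable def qBasis : Fin 4 → ℍ[ℝ] :=
  ![1, ⟨0, 1, 0, 0⟩, ⟨0, 0, 1, 0⟩, ⟨0, 0, 0, 1⟩]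

/-- Coordinates of a quaternion with respect to `(1, i, j, k)`. -/
noncomputable def qCoord (q : ℍ[ℝ]) : Fin 4 → ℝ :=
  ![q.re, q.imI, q.imJ, q.imK]

/-- We model `uW ⊗_ℝ ℍ` as quadruples `(w₀, w₁, w₂, w₃) : Fin 4 → W`, standing for
`w₀⊗1 + w₁⊗i + w₂⊗j + w₃⊗k`.  The right ℍ-action is then given by
`(Σ_a w_a ⊗ e_a)·μ = Σ_b (Σ_a coord_b(e_a μ) • w_a) ⊗ e_b`. -/
noncomputable def tensorRMul {W : Type*} [AddCommGroup W] [Module ℝ W]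
    (w : Fin 4 → W) (μ : ℍ[ℝ]) : Fin 4 → W :=
  fun b => ∑ a, qCoord (qBasis a * μ) b • w a

/-- The ℍ-valued inner product on `uW ⊗_ℝ ℍ` (in the quadruple model), determined by
`[x⊗λ, y⊗μ] = conj(λ)·⟨x,y⟩·μ`, where `⟨x,y⟩ = Re [x,y]` is the underlying real inner
product of the quaternionic inner product `inn` on `W`. -/
noncomputable def tensorInner {W : Type*} (inn : W → W → ℍ[ℝ])
    (x y : Fin 4 → W) : ℍ[ℝ] :=
  ∑ a, ∑ b, star (qBasis a) * (((inn (x a) (y b)).re : ℝ) : ℍ[ℝ]) * qBasis b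

/-- The map `ζ : W → uW ⊗_ℝ ℍ`, `ζ(x) = (1/2)(x⊗1 - xi⊗i - xj⊗j - xk⊗k)`, in the quadruple
model of `uW ⊗_ℝ ℍ`. -/
noncomputable def zetaMap {W : Type*} [AddCommGroup W] [Module ℝ W]
    (rsmul : W → ℍ[ℝ] → W) (x : W) : Fin 4 → W :=
  ![(1 / 2 : ℝ) • x,
    -((1 / 2 : ℝ) • rsmul x (qBasis 1)),
    -((1 / 2 : ℝ) • rsmul x (qBasis 2)),
    -((1 / 2 : ℝ) • rsmul x (qBasis 3))]

/-- The coefficient quadruple of `ζ`: `ζ(x) b = rsmul x (cvec b)`. -/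
noncomputable def cvec : Fin 4 → ℍ[ℝ] :=
  ![((1/2 : ℝ) : ℍ[ℝ]), -(((1/2 : ℝ) : ℍ[ℝ]) * qBasis 1),
    -(((1/2 : ℝ) : ℍ[ℝ]) * qBasis 2), -(((1/2 : ℝ) : ℍ[ℝ]) * qBasis 3)]

lemma qBasis0 : qBasis 0 = 1 := rfl
lemma qBasis1 : (qBasis 1).re = 0 ∧ (qBasis 1).imI = 1 ∧ (qBasis 1).imJ = 0 ∧
    (qBasis 1).imK = 0 := ⟨rfl, rfl, rfl, rfl⟩
lemma qBasis2 : (qBasis 2).re = 0 ∧ (qBasis 2).imI = 0 ∧ (qBasis 2).imJ = 1 ∧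
    (qBasis 2).imK = 0 := ⟨rfl, rfl, rfl, rfl⟩
lemma qBasis3 : (qBasis 3).re = 0 ∧ (qBasis 3).imI = 0 ∧ (qBasis 3).imJ = 0 ∧
    (qBasis 3).imK = 1 := ⟨rfl, rfl, rfl, rfl⟩
lemma cvec0 : cvec 0 = ((1/2 : ℝ) : ℍ[ℝ]) := rfl
lemma cvec1 : cvec 1 = -(((1/2 : ℝ) : ℍ[ℝ]) * qBasis 1) := rfl
lemma cvec2 : cvec 2 = -(((1/2 : ℝ) : ℍ[ℝ]) * qBasis 2) := rfl
lemma cvec3 : cvec 3 = -(((1/2 : ℝ) : ℍ[ℝ]) * qBasis 3) := rfl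
lemma qCoord0 (q : ℍ[ℝ]) : qCoord q 0 = q.re := rfl
lemma qCoord1 (q : ℍ[ℝ]) : qCoord q 1 = q.imI := rfl
lemma qCoord2 (q : ℍ[ℝ]) : qCoord q 2 = q.imJ := rfl
lemma qCoord3 (q : ℍ[ℝ]) : qCoord q 3 = q.imK := rfl

/-- The quaternion identity underlying right ℍ-linearity of `ζ`. -/
lemma key2 (μ : ℍ[ℝ]) (b : Fin 4) :
    ∑ a, cvec a * ((qCoord (qBasis a * μ) b : ℝ) : ℍ[ℝ]) = μ * cvec b := by
  rw [Fin.sum_univ_four]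
  fin_cases b <;>
  · apply Quaternion.ext <;>
    · simp only [show (⟨0, by omega⟩ : Fin 4) = 0 from rfl,
        show (⟨1, by omega⟩ : Fin 4) = 1 from rfl,
        show (⟨2, by omega⟩ : Fin 4) = 2 from rfl,
        show (⟨3, by omega⟩ : Fin 4) = 3 from rfl,
        qBasis0, qBasis1, qBasis2, qBasis3, cvec0, cvec1, cvec2, cvec3,
        qCoord0, qCoord1, qCoord2, qCoord3,
        Quaternion.re_mul, Quaternion.imI_mul, Quaternion.imJ_mul, Quaternion.imK_mul,
        QuaternionAlgebra.re_mul, QuaternionAlgebra.imI_mul, QuaternionAlgebra.imJ_mul,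
        QuaternionAlgebra.imK_mul,
        Quaternion.re_neg, Quaternion.imI_neg, Quaternion.imJ_neg, Quaternion.imK_neg,
        Quaternion.re_add, Quaternion.imI_add, Quaternion.imJ_add, Quaternion.imK_add,
        Quaternion.re_coe, Quaternion.imI_coe, Quaternion.imJ_coe, Quaternion.imK_coe,
        Quaternion.re_one, Quaternion.imI_one, Quaternion.imJ_one, Quaternion.imK_one]
      ring

set_option maxHeartbeats 1000000 in
/-- The quaternion identity underlying the isometry property of `ζ`. -/
lemma key3 (q : ℍ[ℝ]) :
    ∑ a, ∑ b, star (qBasis a) * (((star (cvec a) * q * cvec b).re : ℝ) : ℍ[ℝ]) * qBasis b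
      = q := by
  simp only [Fin.sum_univ_four]
  apply Quaternion.ext <;>
  · simp only [qBasis0, qBasis1, qBasis2, qBasis3, cvec0, cvec1, cvec2, cvec3,
      Quaternion.re_mul, Quaternion.imI_mul, Quaternion.imJ_mul, Quaternion.imK_mul,
        QuaternionAlgebra.re_mul, QuaternionAlgebra.imI_mul, QuaternionAlgebra.imJ_mul,
        QuaternionAlgebra.imK_mul,
      Quaternion.re_neg, Quaternion.imI_neg, Quaternion.imJ_neg, Quaternion.imK_neg,
      Quaternion.re_add, Quaternion.imI_add, Quaternion.imJ_add, Quaternion.imK_add,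
      Quaternion.re_coe, Quaternion.imI_coe, Quaternion.imJ_coe, Quaternion.imK_coe,
      Quaternion.re_one, Quaternion.imI_one, Quaternion.imJ_one, Quaternion.imK_one,
      Quaternion.re_star, Quaternion.imI_star, Quaternion.imJ_star, Quaternion.imK_star]
    ring

/-- For a finite-dimensional quaternionic inner product space `W` (encoded by a
real vector space with right ℍ-action `rsmul` and ℍ-valued inner product `inn`), the map
`ζ : W → uW ⊗_ℝ ℍ`, `ζ(x) = (1/2)(x⊗1 - xi⊗i - xj⊗j - xk⊗k)`, is additive, right ℍ-linear
and isometric: `[ζ(x), ζ(y)] = [x, y]`. -/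
theorem stmt15 {W : Type*} [AddCommGroup W] [Module ℝ W] [FiniteDimensional ℝ W]
    (rsmul : W → ℍ[ℝ] → W)
    (rsmul_add : ∀ (x y : W) (q : ℍ[ℝ]), rsmul (x + y) q = rsmul x q + rsmul y q)
    (rsmul_radd : ∀ (x : W) (q q' : ℍ[ℝ]), rsmul x (q + q') = rsmul x q + rsmul x q')
    (rsmul_mul : ∀ (x : W) (q q' : ℍ[ℝ]), rsmul (rsmul x q) q' = rsmul x (q * q'))
    (rsmul_one : ∀ x : W, rsmul x 1 = x)
    (rsmul_real : ∀ (x : W) (r : ℝ), rsmul x ((r : ℍ[ℝ])) = r • x)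
    (inn : W → W → ℍ[ℝ])
    (inn_add_left : ∀ x y z : W, inn (x + y) z = inn x z + inn y z)
    (inn_add_right : ∀ x y z : W, inn x (y + z) = inn x y + inn x z)
    (inn_smul : ∀ (x y : W) (q q' : ℍ[ℝ]),
      inn (rsmul x q) (rsmul y q') = star q * inn x y * q')
    (inn_conj : ∀ x y : W, inn y x = star (inn x y))
    (inn_pos : ∀ x : W, x ≠ 0 → ∃ r : ℝ, 0 < r ∧ inn x x = (r : ℍ[ℝ])) :
    (∀ x y : W, zetaMap rsmul (x + y) = zetaMap rsmul x + zetaMap rsmul y) ∧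
    (∀ (x : W) (μ : ℍ[ℝ]), zetaMap rsmul (rsmul x μ) = tensorRMul (zetaMap rsmul x) μ) ∧
    (∀ x y : W, tensorInner inn (zetaMap rsmul x) (zetaMap rsmul y) = inn x y) := by
  -- basic consequences of the axioms
  have hzero : ∀ x : W, rsmul x 0 = 0 := by
    intro x
    have := rsmul_real x 0
    simpa using this
  have hneg : ∀ (x : W) (q : ℍ[ℝ]), rsmul x (-q) = -rsmul x q := by
    intro x q
    have h : rsmul x q + rsmul x (-q) = 0 := by
      rw [← rsmul_radd, add_neg_cancel, hzero]
    exact eq_neg_of_add_eq_zero_right h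
  have hr : ∀ (x : W) (q : ℍ[ℝ]) (r : ℝ),
      r • rsmul x q = rsmul x (q * (r : ℍ[ℝ])) := by
    intro x q r
    rw [← rsmul_real (rsmul x q) r, rsmul_mul]
  -- ζ(x) b = rsmul x (cvec b)
  have zeta0 : ∀ x : W, zetaMap rsmul x 0 = rsmul x (cvec 0) := by
    intro x
    show (1 / 2 : ℝ) • x = rsmul x (((1/2 : ℝ) : ℍ[ℝ]))
    exact (rsmul_real x (1/2)).symm
  have zeta1 : ∀ x : W, zetaMap rsmul x 1 = rsmul x (cvec 1) := by
    intro x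
    show -((1 / 2 : ℝ) • rsmul x (qBasis 1)) = rsmul x (cvec 1)
    rw [hr, cvec1, Quaternion.coe_commutes, hneg]
  have zeta2 : ∀ x : W, zetaMap rsmul x 2 = rsmul x (cvec 2) := by
    intro x
    show -((1 / 2 : ℝ) • rsmul x (qBasis 2)) = rsmul x (cvec 2)
    rw [hr, cvec2, Quaternion.coe_commutes, hneg]
  have zeta3 : ∀ x : W, zetaMap rsmul x 3 = rsmul x (cvec 3) := by
    intro x
    show -((1 / 2 : ℝ) • rsmul x (qBasis 3)) = rsmul x (cvec 3)
    rw [hr, cvec3, Quaternion.coe_commutes, hneg]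
  have zeta_eq : ∀ (x : W) (b : Fin 4), zetaMap rsmul x b = rsmul x (cvec b) := by
    intro x b
    fin_cases b
    · exact zeta0 x
    · exact zeta1 x
    · exact zeta2 x
    · exact zeta3 x
  refine ⟨?_, ?_, ?_⟩
  · -- additivity
    intro x y
    funext b
    rw [Pi.add_apply, zeta_eq, zeta_eq, zeta_eq, rsmul_add]
  · -- right ℍ-linearity
    intro x μ
    funext b
    rw [zeta_eq, rsmul_mul]
    show rsmul x (μ * cvec b) = ∑ a, qCoord (qBasis a * μ) b • zetaMap rsmul x a
    rw [← key2 μ b]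
    rw [Fin.sum_univ_four, Fin.sum_univ_four]
    rw [zeta_eq, zeta_eq, zeta_eq, zeta_eq, hr, hr, hr, hr,
      ← rsmul_radd, ← rsmul_radd, ← rsmul_radd]
  · -- isometry
    intro x y
    show (∑ a, ∑ b, star (qBasis a)
        * (((inn (zetaMap rsmul x a) (zetaMap rsmul y b)).re : ℝ) : ℍ[ℝ]) * qBasis b)
      = inn x y
    have : ∀ a b : Fin 4,
        inn (zetaMap rsmul x a) (zetaMap rsmul y b)
          = star (cvec a) * inn x y * cvec b := by
      intro a b
      rw [zeta_eq, zeta_eq, inn_smul]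
    simp only [this]
    exact key3 (inn x y)
end
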